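/- arXiv:2002.06848 — 5 statements merged into one kernel-verified Lean document; each statement's English description precedes it below -/
import Mathlib

section
/- Let E be a real inner product space (e.g. ℝ^p with the Euclidean inner product) and let f : E → ℝ be twice continuously differentiable, with gradient ∇f and Hessian ∇²f (the second derivative, viewed as a symmetric continuous bilinear form). Suppose the Hessian is M-Lipschitz continuous, i.e. ‖∇²f(x) − ∇²f(y)‖ ≤ M‖x − y‖ in operator norm for all x, y. Then for all x, y ∈ E: f(x) ≤ f(y) + ⟨∇f(y), x − y⟩ + (1/2)⟨x − y, ∇²f(y)(x − y)⟩ + (M/6)‖x − y‖³. -/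
open scoped RealInnerProductSpace

/-- Cubic overestimation bound: if `f` is twice continuously differentiable with
`M`-Lipschitz Hessian, then
`f x ≤ f y + ⟪∇f y, x - y⟫ + (1/2) ⟪x - y, ∇²f y (x - y)⟫ + (M/6) ‖x - y‖³`. -/
theorem cubic_overestimation
    {E : Type*} [NormedAddCommGroup E] [InnerProductSpace ℝ E] [CompleteSpace E]
    (f : E → ℝ) (M : ℝ) (hM : 0 < M)
    (hf : ContDiff ℝ 2 f)
    (hLip : ∀ x y : E, ‖iteratedFDeriv ℝ 2 f x - iteratedFDeriv ℝ 2 f y‖ ≤ M * ‖x - y‖) :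
    ∀ x y : E,
      f x ≤ f y + ⟪gradient f y, x - y⟫ + (1 / 2) * iteratedFDeriv ℝ 2 f y ![x - y, x - y]
        + (M / 6) * ‖x - y‖ ^ 3 := by
  intro x y
  set h : E := x - y with hh
  set γ : ℝ → E := fun t => y + t • h with hγ
  have hγ0 : γ 0 = y := by simp [hγ]
  have hγ1 : γ 1 = x := by simp [hγ, hh]
  have hfd : Differentiable ℝ f := hf.differentiable (by norm_num)
  have hF1 : ContDiff ℝ 1 (fderiv ℝ f) := hf.fderiv_right (by norm_num)
  set g1 : ℝ → ℝ := fun t => fderiv ℝ f (γ t) h with hg1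
  set g2 : ℝ → ℝ := fun t => iteratedFDeriv ℝ 2 f (γ t) ![h, h] with hg2
  have hγd : ∀ t : ℝ, HasDerivAt γ h t := fun t => by
    simpa [hγ] using ((hasDerivAt_id t).smul_const h).const_add y
  have hd1 : ∀ t : ℝ, HasDerivAt (fun t => f (γ t)) (g1 t) t := fun t =>
    (hfd (γ t)).hasFDerivAt.comp_hasDerivAt t (hγd t)
  have hd2 : ∀ t : ℝ, HasDerivAt g1 (g2 t) t := by
    intro t
    have hFd : HasFDerivAt (fderiv ℝ f) (fderiv ℝ (fderiv ℝ f) (γ t)) (γ t) :=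
      ((hF1.differentiable one_ne_zero) (γ t)).hasFDerivAt
    have := (hFd.comp_hasDerivAt t (hγd t)).clm_apply (hasDerivAt_const t h)
    simp only [map_zero, add_zero] at this
    have heq : g2 t = fderiv ℝ (fderiv ℝ f) (γ t) h h := by
      show iteratedFDeriv ℝ 2 f (γ t) ![h, h] = _
      rw [iteratedFDeriv_two_apply]
      simp
    rw [heq]
    exact this
  -- Lipschitz bound for g2
  set L : ℝ := M * ‖h‖ ^ 3 with hL
  have hLnn : 0 ≤ L := by positivity
  have hg2lip : ∀ s t : ℝ, |g2 t - g2 s| ≤ L * |t - s| := by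
    intro s t
    have e1 : g2 t - g2 s
        = (iteratedFDeriv ℝ 2 f (γ t) - iteratedFDeriv ℝ 2 f (γ s)) ![h, h] := by
      simp [hg2]
    have e2 : ‖(iteratedFDeriv ℝ 2 f (γ t) - iteratedFDeriv ℝ 2 f (γ s)) ![h, h]‖
        ≤ ‖iteratedFDeriv ℝ 2 f (γ t) - iteratedFDeriv ℝ 2 f (γ s)‖ * (‖h‖ * ‖h‖) := by
      have := (iteratedFDeriv ℝ 2 f (γ t) - iteratedFDeriv ℝ 2 f (γ s)).le_opNorm ![h, h]
      simpa [Fin.prod_univ_two] using this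
    have e3 : ‖iteratedFDeriv ℝ 2 f (γ t) - iteratedFDeriv ℝ 2 f (γ s)‖
        ≤ M * (|t - s| * ‖h‖) := by
      have := hLip (γ t) (γ s)
      have e4 : γ t - γ s = (t - s) • h := by
        simp [hγ, sub_smul]
      rwa [e4, norm_smul, Real.norm_eq_abs] at this
    calc |g2 t - g2 s| = ‖(iteratedFDeriv ℝ 2 f (γ t) - iteratedFDeriv ℝ 2 f (γ s)) ![h, h]‖ := by
          rw [e1]; rfl
      _ ≤ ‖iteratedFDeriv ℝ 2 f (γ t) - iteratedFDeriv ℝ 2 f (γ s)‖ * (‖h‖ * ‖h‖) := e2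
      _ ≤ (M * (|t - s| * ‖h‖)) * (‖h‖ * ‖h‖) := by
          apply mul_le_mul_of_nonneg_right e3 (by positivity)
      _ = L * |t - s| := by rw [hL]; ring
  have hg2cont : Continuous g2 := by
    have : LipschitzWith (Real.toNNReal L) g2 := by
      apply LipschitzWith.of_dist_le_mul
      intro a b
      simp only [Real.dist_eq]
      calc |g2 a - g2 b| ≤ L * |a - b| := hg2lip b a
        _ ≤ Real.toNNReal L * |a - b| := by
            gcongr
            exact Real.le_coe_toNNReal L
    exact this.continuous
  have hg1cont : Continuous g1 := by
    have : Differentiable ℝ g1 := fun t => (hd2 t).differentiableAt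
    exact this.continuous
  -- Step E : second-order Taylor bound on g1
  have stepE : ∀ t : ℝ, 0 ≤ t → |g1 t - g1 0 - t * g2 0| ≤ L * t ^ 2 / 2 := by
    intro t ht
    have ftc : ∫ s in (0:ℝ)..t, g2 s = g1 t - g1 0 :=
      intervalIntegral.integral_eq_sub_of_hasDerivAt (fun s _ => hd2 s)
        (hg2cont.intervalIntegrable 0 t)
    have hconst : ∫ _ in (0:ℝ)..t, g2 0 = t * g2 0 := by simp [mul_comm]
    have e1 : g1 t - g1 0 - t * g2 0 = ∫ s in (0:ℝ)..t, (g2 s - g2 0) := by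
      rw [intervalIntegral.integral_sub (hg2cont.intervalIntegrable 0 t)
        (intervalIntegrable_const), ftc, hconst]
    rw [e1]
    calc |∫ s in (0:ℝ)..t, (g2 s - g2 0)| ≤ ∫ s in (0:ℝ)..t, |g2 s - g2 0| :=
          intervalIntegral.abs_integral_le_integral_abs ht
      _ ≤ ∫ s in (0:ℝ)..t, L * s := by
          apply intervalIntegral.integral_mono_on ht
          · exact ((hg2cont.sub continuous_const).abs).intervalIntegrable 0 t
          · exact (continuous_const.mul continuous_id).intervalIntegrable 0 t
          · intro s hs
            have := hg2lip 0 s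
            simpa [abs_of_nonneg hs.1] using this
      _ = L * t ^ 2 / 2 := by
          rw [intervalIntegral.integral_const_mul, integral_id]
          ring
  -- Step F : third-order bound
  have ftc1 : ∫ t in (0:ℝ)..1, g1 t = f x - f y := by
    rw [← hγ0, ← hγ1]
    exact intervalIntegral.integral_eq_sub_of_hasDerivAt (fun s _ => hd1 s)
      (hg1cont.intervalIntegrable 0 1)
  have key : |f x - f y - g1 0 - (1/2) * g2 0| ≤ L / 6 := by
    have i1 : IntervalIntegrable (fun t => g1 t - g1 0) MeasureTheory.volume 0 1 :=
      (hg1cont.sub continuous_const).intervalIntegrable 0 1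
    have i2 : IntervalIntegrable (fun t : ℝ => t * g2 0) MeasureTheory.volume 0 1 :=
      (continuous_id'.mul continuous_const).intervalIntegrable 0 1
    have e1 : f x - f y - g1 0 - (1/2) * g2 0
        = ∫ t in (0:ℝ)..1, (g1 t - g1 0 - t * g2 0) := by
      rw [intervalIntegral.integral_sub i1 i2,
        intervalIntegral.integral_sub (hg1cont.intervalIntegrable 0 1)
          intervalIntegrable_const, ftc1]
      have h2 : ∫ t in (0:ℝ)..1, t * g2 0 = (1/2) * g2 0 := by
        rw [intervalIntegral.integral_mul_const, integral_id]
        ring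
      rw [h2, intervalIntegral.integral_const]
      simp
    rw [e1]
    calc |∫ t in (0:ℝ)..1, (g1 t - g1 0 - t * g2 0)|
        ≤ ∫ t in (0:ℝ)..1, |g1 t - g1 0 - t * g2 0| :=
          intervalIntegral.abs_integral_le_integral_abs zero_le_one
      _ ≤ ∫ t in (0:ℝ)..1, L * t ^ 2 / 2 := by
          apply intervalIntegral.integral_mono_on zero_le_one
          · exact (((hg1cont.sub continuous_const).sub
              (continuous_id.mul continuous_const)).abs).intervalIntegrable 0 1
          · exact ((continuous_const.mul (continuous_pow 2)).div_const 2).intervalIntegrable 0 1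
          · intro t htt
            exact stepE t htt.1
      _ = L / 6 := by
          have hrw : ∀ t : ℝ, L * t ^ 2 / 2 = (L / 2) * t ^ 2 := fun t => by ring
          simp only [hrw]
          rw [intervalIntegral.integral_const_mul, integral_pow]
          norm_num
          ring
  have hgrad : ⟪gradient f y, h⟫ = g1 0 := by
    show ⟪gradient f y, h⟫ = fderiv ℝ f (γ 0) h
    rw [hγ0]
    exact InnerProductSpace.toDual_symm_apply
  have hg20 : g2 0 = iteratedFDeriv ℝ 2 f y ![h, h] := by
    show iteratedFDeriv ℝ 2 f (γ 0) ![h, h] = _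
    rw [hγ0]
  have := (abs_le.mp key).2
  rw [hgrad, ← hg20]
  linarith
end

section
/- Let H be a symmetric real p×p matrix with smallest eigenvalue λ_p(H), let g ∈ ℝ^p, σ > 0, and λ > 0. Suppose H + λI is positive definite and the vector d = −(H + λI)^{-1} g satisfies σ‖d‖ = λ. Then λ·(λ + λ_p(H)) ≤ σ‖g‖. -/
open scoped RealInnerProductSpace

/-- Rayleigh lower bound: if `μ` is below all eigenvalues of a real symmetric matrix `A`,
then `μ ‖x‖² ≤ ⟪x, A x⟫`. -/
lemma rayleigh_min_aux {n : Type*} [Fintype n] [DecidableEq n]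
    {A : Matrix n n ℝ} (hA : A.IsHermitian) (μ : ℝ)
    (hμ : ∀ i, μ ≤ hA.eigenvalues i) (x : EuclideanSpace ℝ n) :
    μ * ‖x‖ ^ 2 ≤ ⟪x, Matrix.toEuclideanLin A x⟫ := by
  classical
  set b := hA.eigenvectorBasis with hb
  set c : n → ℝ := fun i => b.repr x i with hc
  have hbi : ∀ i, Matrix.toEuclideanLin A (b i) = hA.eigenvalues i • b i := by
    intro i
    apply PiLp.ext
    intro j
    have := congrFun (hA.mulVec_eigenvectorBasis i) j
    simpa [Matrix.toEuclideanLin_apply] using this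
  have hexp : ∀ y : EuclideanSpace ℝ n, ⟪x, y⟫ = ∑ i, c i * ⟪b i, y⟫ := by
    intro y
    conv_lhs => rw [← b.sum_repr x]
    rw [sum_inner]
    simp only [real_inner_smul_left, hc]
  have hcx : ∀ i, ⟪b i, x⟫ = c i := fun i => (b.repr_apply_apply x i).symm
  have hAx : ⟪x, Matrix.toEuclideanLin A x⟫ = ∑ i, hA.eigenvalues i * c i ^ 2 := by
    rw [hexp]
    refine Finset.sum_congr rfl fun i _ => ?_
    have hsym : ⟪Matrix.toEuclideanLin A (b i), x⟫ = ⟪b i, Matrix.toEuclideanLin A x⟫ :=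
      (Matrix.isHermitian_iff_isSymmetric.1 hA) (b i) x
    rw [← hsym, hbi i, real_inner_smul_left, hcx i]
    ring
  have hxx : ‖x‖ ^ 2 = ∑ i, c i ^ 2 := by
    rw [← real_inner_self_eq_norm_sq, hexp]
    refine Finset.sum_congr rfl fun i _ => ?_
    rw [hcx i]; ring
  rw [hAx, hxx, Finset.mul_sum]
  refine Finset.sum_le_sum fun i _ => ?_
  have := sq_nonneg (c i)
  nlinarith [hμ i]

/-- If `H + λI ≻ 0` and `d = -(H + λI)⁻¹ g` satisfies the secular equation `σ‖d‖ = λ`,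
then `λ(λ + λ_min(H)) ≤ σ‖g‖`, where `λ_min(H)` is the smallest eigenvalue of `H`. -/
theorem cubic_subproblem_multiplier_upper_bound
    (p : ℕ) (hp : 1 ≤ p)
    (H : Matrix (Fin p) (Fin p) ℝ) (hH : H.IsHermitian)
    (g : EuclideanSpace ℝ (Fin p)) (σ lam : ℝ) (hσ : 0 < σ) (hlam : 0 < lam)
    (hpos : (H + lam • (1 : Matrix (Fin p) (Fin p) ℝ)).PosDef)
    (d : EuclideanSpace ℝ (Fin p))
    (hd : d = -(Matrix.toEuclideanLin (H + lam • (1 : Matrix (Fin p) (Fin p) ℝ))⁻¹ g))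
    (hsec : σ * ‖d‖ = lam) :
    lam * (lam + Finset.univ.inf'
        (Finset.univ_nonempty_iff.mpr (Fin.pos_iff_nonempty.mp hp)) hH.eigenvalues)
      ≤ σ * ‖g‖ := by
  classical
  set A := H + lam • (1 : Matrix (Fin p) (Fin p) ℝ) with hA
  set μ := Finset.univ.inf'
      (Finset.univ_nonempty_iff.mpr (Fin.pos_iff_nonempty.mp hp)) hH.eigenvalues with hμ
  -- dispose of the easy case
  rcases le_or_gt (lam + μ) 0 with hneg | hposμ
  · have : lam * (lam + μ) ≤ 0 := mul_nonpos_of_nonneg_of_nonpos hlam.le hneg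
    have : 0 ≤ σ * ‖g‖ := mul_nonneg hσ.le (norm_nonneg g)
    linarith
  -- A is invertible
  have hunit : IsUnit A.det := isUnit_iff_ne_zero.mpr (ne_of_gt hpos.det_pos)
  have hAAinv : A * A⁻¹ = 1 := Matrix.mul_nonsing_inv A hunit
  -- A d = -g
  have hAd : Matrix.toEuclideanLin A d = -g := by
    rw [hd, map_neg]
    apply PiLp.ext
    intro j
    simp [Matrix.toEuclideanLin_apply, Matrix.mulVec_mulVec, hAAinv]
  -- d ≠ 0
  have hdne : ‖d‖ ≠ 0 := by
    intro h
    rw [h, mul_zero] at hsec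
    exact absurd hsec.symm (ne_of_gt hlam)
  have hdpos : 0 < ‖d‖ := lt_of_le_of_ne (norm_nonneg d) (Ne.symm hdne)
  -- Rayleigh bound on H
  have hray : μ * ‖d‖ ^ 2 ≤ ⟪d, Matrix.toEuclideanLin H d⟫ :=
    rayleigh_min_aux hH μ (fun i => Finset.inf'_le _ (Finset.mem_univ i)) d
  -- expand ⟪d, A d⟫
  have hsplit : ⟪d, Matrix.toEuclideanLin A d⟫
      = ⟪d, Matrix.toEuclideanLin H d⟫ + lam * ‖d‖ ^ 2 := by
    have h1 : Matrix.toEuclideanLin A d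
        = Matrix.toEuclideanLin H d + lam • d := by
      rw [hA, map_add, map_smul]
      apply PiLp.ext
      intro j
      simp [Matrix.toEuclideanLin_apply]
    rw [h1, inner_add_right, real_inner_smul_right, real_inner_self_eq_norm_sq]
  -- ⟪d, A d⟫ = ⟪d, -g⟫ ≤ ‖d‖ ‖g‖
  have hbound : ⟪d, Matrix.toEuclideanLin A d⟫ ≤ ‖d‖ * ‖g‖ := by
    rw [hAd, inner_neg_right]
    have := real_inner_le_norm d g
    have h2 := abs_real_inner_le_norm d g
    nlinarith [neg_abs_le (⟪d, g⟫)]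
  have hkey : (lam + μ) * ‖d‖ ^ 2 ≤ ‖d‖ * ‖g‖ := by nlinarith
  have hdiv : (lam + μ) * ‖d‖ ≤ ‖g‖ := by
    have := mul_le_mul_of_nonneg_right hkey (le_of_lt (inv_pos.mpr hdpos))
    calc (lam + μ) * ‖d‖ = (lam + μ) * ‖d‖ ^ 2 * ‖d‖⁻¹ := by
          field_simp
      _ ≤ ‖d‖ * ‖g‖ * ‖d‖⁻¹ := this
      _ = ‖g‖ := by field_simp
  calc lam * (lam + μ) = σ * ((lam + μ) * ‖d‖) := by rw [← hsec]; ring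
    _ ≤ σ * ‖g‖ := mul_le_mul_of_nonneg_left hdiv hσ.le
end

section
/- Let H be a symmetric real p×p matrix with largest eigenvalue λ_1(H), let g ∈ ℝ^p, σ > 0, and λ > 0. Suppose H + λI is positive definite and the vector d = −(H + λI)^{-1} g satisfies σ‖d‖ = λ. Then λ·(λ + λ_1(H)) ≥ σ‖g‖. -/
open Matrix RealInnerProductSpace


/-- If `H + λI ≻ 0` and `d = -(H + λI)⁻¹ g` satisfies the secular equation `σ‖d‖ = λ`,
then `λ(λ + λ_max(H)) ≥ σ‖g‖`, where `λ_max(H)` is the largest eigenvalue of `H`. -/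
theorem cubic_subproblem_multiplier_lower_bound
    (p : ℕ) (hp : 1 ≤ p)
    (H : Matrix (Fin p) (Fin p) ℝ) (hH : H.IsHermitian)
    (g : EuclideanSpace ℝ (Fin p)) (σ lam : ℝ) (hσ : 0 < σ) (hlam : 0 < lam)
    (hpos : (H + lam • (1 : Matrix (Fin p) (Fin p) ℝ)).PosDef)
    (d : EuclideanSpace ℝ (Fin p))
    (hd : d = -(Matrix.toEuclideanLin (H + lam • (1 : Matrix (Fin p) (Fin p) ℝ))⁻¹ g))
    (hsec : σ * ‖d‖ = lam) :
    lam * (lam + Finset.univ.sup'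
        (Finset.univ_nonempty_iff.mpr (Fin.pos_iff_nonempty.mp hp)) hH.eigenvalues)
      ≥ σ * ‖g‖ := by
  classical
  set A := H + lam • (1 : Matrix (Fin p) (Fin p) ℝ) with hAdef
  have hAH : A.IsHermitian := hpos.1
  set b := hH.eigenvectorBasis with hbdef
  set eig := hH.eigenvalues with heigdef
  set L := Finset.univ.sup'
      (Finset.univ_nonempty_iff.mpr (Fin.pos_iff_nonempty.mp hp)) hH.eigenvalues with hLdef
  have hdet : IsUnit A.det := isUnit_iff_ne_zero.mpr hpos.det_pos.ne'
  -- g = -(A d)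
  have hg : g = -(Matrix.toEuclideanLin A d) := by
    rw [hd, map_neg, neg_neg]
    apply (WithLp.equiv 2 _).injective
    show (WithLp.equiv 2 _) g = A *ᵥ (A⁻¹ *ᵥ (WithLp.equiv 2 _) g)
    rw [Matrix.mulVec_mulVec, Matrix.mul_nonsing_inv _ hdet, Matrix.one_mulVec]
  -- A applied to eigenvectors (as plain vectors)
  have hAbv : ∀ i, A *ᵥ ⇑(b i) = (eig i + lam) • ⇑(b i) := by
    intro i
    rw [hAdef, Matrix.add_mulVec, hH.mulVec_eigenvectorBasis, Matrix.smul_mulVec,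
      Matrix.one_mulVec, add_smul]
  have hAb : ∀ i, Matrix.toEuclideanLin A (b i) = (eig i + lam) • b i := by
    intro i
    apply (WithLp.equiv 2 _).injective
    show A *ᵥ ⇑(b i) = (eig i + lam) • ⇑(b i)
    exact hAbv i
  have hsym : (Matrix.toEuclideanLin A).IsSymmetric :=
    Matrix.isHermitian_iff_isSymmetric.mp hAH
  have hrepr : ∀ i, b.repr g i = -((eig i + lam) * b.repr d i) := by
    intro i
    rw [hg, map_neg]
    simp only [PiLp.neg_apply]
    rw [OrthonormalBasis.repr_apply_apply, OrthonormalBasis.repr_apply_apply,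
      ← hsym (b i) d, hAb i, real_inner_smul_left]
  have hdot : ∀ i, dotProduct (star ⇑(b i)) (⇑(b i)) = 1 := by
    intro i
    have h3 : (inner ℝ (b i) (b i) : ℝ) = 1 := by
      rw [real_inner_self_eq_norm_sq, b.orthonormal.1 i]; norm_num
    simp only [PiLp.inner_apply] at h3
    simpa [dotProduct, mul_comm, sq] using h3
  have heigpos : ∀ i, 0 < eig i + lam := by
    intro i
    have hx : (⇑(b i) : Fin p → ℝ) ≠ 0 := by simpa using b.orthonormal.ne_zero i
    have h1 := hpos.re_dotProduct_pos hx
    have h2 : dotProduct (star ⇑(b i)) (A *ᵥ ⇑(b i)) = eig i + lam := by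
      rw [hAbv i, dotProduct_smul, hdot i, smul_eq_mul, mul_one]
    rw [h2] at h1
    simpa using h1
  have hLlam : ∀ i, eig i + lam ≤ L + lam := fun i =>
    add_le_add_left (Finset.le_sup' _ (Finset.mem_univ i)) lam
  have hLpos : 0 < L + lam := lt_of_lt_of_le (heigpos ⟨0, hp⟩) (hLlam ⟨0, hp⟩)
  -- norms in coordinates
  have hns : ∀ x : EuclideanSpace ℝ (Fin p), ‖x‖ ^ 2 = ∑ i, (b.repr x i) ^ 2 := by
    intro x
    rw [← b.repr.norm_map x, EuclideanSpace.norm_eq,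
      Real.sq_sqrt (Finset.sum_nonneg fun i _ => sq_nonneg _)]
    simp [sq_abs]
  have hsum : ‖g‖ ^ 2 ≤ ((L + lam) * ‖d‖) ^ 2 := by
    rw [hns g, mul_pow, hns d, Finset.mul_sum]
    apply Finset.sum_le_sum
    intro i _
    rw [hrepr i]
    have h1 : (eig i + lam) ^ 2 ≤ (L + lam) ^ 2 :=
      pow_le_pow_left₀ (heigpos i).le (hLlam i) 2
    calc (-((eig i + lam) * b.repr d i)) ^ 2
        = (eig i + lam) ^ 2 * (b.repr d i) ^ 2 := by ring
      _ ≤ (L + lam) ^ 2 * (b.repr d i) ^ 2 :=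
          mul_le_mul_of_nonneg_right h1 (sq_nonneg _)
  have hng : ‖g‖ ≤ (L + lam) * ‖d‖ := by
    nlinarith [norm_nonneg g, norm_nonneg d, hLpos.le, mul_nonneg hLpos.le (norm_nonneg d)]
  have : σ * ‖g‖ ≤ σ * ((L + lam) * ‖d‖) := by
    exact mul_le_mul_of_nonneg_left hng hσ.le
  calc σ * ‖g‖ ≤ σ * ((L + lam) * ‖d‖) := this
    _ = (σ * ‖d‖) * (L + lam) := by ring
    _ = lam * (lam + L) := by rw [hsec]; ring
end

section
/- Let H be a symmetric real p×p matrix, g ∈ ℝ^p, σ > 0, and define m(d) = ⟨g, d⟩ + (1/2)⟨d, H d⟩ + (σ/3)‖d‖³ for d ∈ ℝ^p. Suppose d* ∈ ℝ^p satisfies (H + σ‖d*‖·I) d* = −g and the matrix H + σ‖d*‖·I is positive semidefinite. Then d* is a global minimizer of m, i.e. m(d*) ≤ m(d) for all d ∈ ℝ^p. -/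
open scoped RealInnerProductSpace

lemma psd_inner_nonneg {p : ℕ} {A : Matrix (Fin p) (Fin p) ℝ}
    (hA : A.PosSemidef) (x : EuclideanSpace ℝ (Fin p)) :
    0 ≤ ⟪x, Matrix.toEuclideanLin A x⟫ := by
  have := hA.re_dotProduct_nonneg (WithLp.equiv 2 (Fin p → ℝ) x)
  simpa [Matrix.toEuclideanLin_apply, dotProduct, inner, RCLike.re_to_real, mul_comm]
    using this

lemma sym_inner {p : ℕ} {A : Matrix (Fin p) (Fin p) ℝ} (hA : A.IsSymm)
    (x y : EuclideanSpace ℝ (Fin p)) :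
    ⟪Matrix.toEuclideanLin A x, y⟫ = ⟪x, Matrix.toEuclideanLin A y⟫ := by
  have hH : A.IsHermitian := hA
  exact (Matrix.isHermitian_iff_isSymmetric.mp hH x y)

/-- Global optimality for the cubic-regularized quadratic model: if
`(H + σ‖d*‖ I) d* = -g` and `H + σ‖d*‖ I ⪰ 0`, then `d*` is a global minimizer of
`m(d) = ⟨g, d⟩ + (1/2)⟨d, H d⟩ + (σ/3)‖d‖³`. -/
theorem cubic_subproblem_global_minimizer
    (p : ℕ) (hp : 1 ≤ p)
    (H : Matrix (Fin p) (Fin p) ℝ) (hH : H.IsSymm)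
    (g : EuclideanSpace ℝ (Fin p)) (σ : ℝ) (hσ : 0 < σ)
    (dstar : EuclideanSpace ℝ (Fin p))
    (hfoc : Matrix.toEuclideanLin
        (H + (σ * ‖dstar‖) • (1 : Matrix (Fin p) (Fin p) ℝ)) dstar = -g)
    (hpsd : (H + (σ * ‖dstar‖) • (1 : Matrix (Fin p) (Fin p) ℝ)).PosSemidef) :
    ∀ d : EuclideanSpace ℝ (Fin p),
      ⟪g, dstar⟫ + (1 / 2) * ⟪dstar, Matrix.toEuclideanLin H dstar⟫ + (σ / 3) * ‖dstar‖ ^ 3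
        ≤ ⟪g, d⟫ + (1 / 2) * ⟪d, Matrix.toEuclideanLin H d⟫ + (σ / 3) * ‖d‖ ^ 3 := by
  intro d
  set B : EuclideanSpace ℝ (Fin p) →ₗ[ℝ] EuclideanSpace ℝ (Fin p) :=
    Matrix.toEuclideanLin H with hB
  set lam : ℝ := σ * ‖dstar‖ with hlam
  -- toEuclideanLin of identity
  have hone : ∀ x : EuclideanSpace ℝ (Fin p),
      Matrix.toEuclideanLin (1 : Matrix (Fin p) (Fin p) ℝ) x = x := by
    intro x
    simp [Matrix.toEuclideanLin_apply, Matrix.one_mulVec]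
  have hadd : ∀ x : EuclideanSpace ℝ (Fin p),
      Matrix.toEuclideanLin (H + lam • (1 : Matrix (Fin p) (Fin p) ℝ)) x
        = B x + lam • x := by
    intro x
    rw [map_add, map_smul]
    simp [hone x, hB]
  -- first-order condition
  have hfoc' : B dstar + lam • dstar = -g := by rw [← hadd]; exact hfoc
  -- psd at d - dstar
  have hq : 0 ≤ ⟪d - dstar, B (d - dstar)⟫ + lam * ⟪d - dstar, d - dstar⟫ := by
    have := psd_inner_nonneg hpsd (d - dstar)
    rwa [hadd, inner_add_right, real_inner_smul_right] at this
  -- symmetry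
  have hsym : ∀ x y : EuclideanSpace ℝ (Fin p), ⟪B x, y⟫ = ⟪x, B y⟫ :=
    fun x y => sym_inner hH x y
  -- notation
  set a := ‖d‖ with ha
  set b := ‖dstar‖ with hb
  have ha0 : 0 ≤ a := norm_nonneg _
  have hb0 : 0 ≤ b := norm_nonneg _
  -- inner g d and inner g dstar
  have hgd : ⟪g, d⟫ = -(⟪dstar, B d⟫ + lam * ⟪dstar, d⟫) := by
    have : ⟪B dstar + lam • dstar, d⟫ = ⟪-g, d⟫ := by rw [hfoc']
    rw [inner_add_left, real_inner_smul_left, inner_neg_left, hsym dstar d] at this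
    linarith
  have hgds : ⟪g, dstar⟫ = -(⟪dstar, B dstar⟫ + lam * ⟪dstar, dstar⟫) := by
    have : ⟪B dstar + lam • dstar, dstar⟫ = ⟪-g, dstar⟫ := by rw [hfoc']
    rw [inner_add_left, real_inner_smul_left, inner_neg_left, hsym dstar dstar] at this
    linarith
  -- expand quadratic form at d - dstar
  have hexp : ⟪d - dstar, B (d - dstar)⟫
      = ⟪d, B d⟫ - 2 * ⟪dstar, B d⟫ + ⟪dstar, B dstar⟫ := by
    rw [map_sub, inner_sub_left, inner_sub_right, inner_sub_right]
    have h1 : ⟪d, B dstar⟫ = ⟪dstar, B d⟫ := by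
      rw [← hsym d dstar]; exact real_inner_comm _ _
    linarith
  have hnormexp : ⟪d - dstar, d - dstar⟫ = a ^ 2 - 2 * ⟪dstar, d⟫ + b ^ 2 := by
    rw [inner_sub_left, inner_sub_right, inner_sub_right,
      real_inner_self_eq_norm_sq, real_inner_self_eq_norm_sq]
    have : ⟪d, dstar⟫ = ⟪dstar, d⟫ := real_inner_comm _ _
    linarith
  have hss : ⟪dstar, dstar⟫ = b ^ 2 := real_inner_self_eq_norm_sq _
  rw [hgd, hgds, hss]
  rw [hexp, hnormexp] at hq
  have hcube : 0 ≤ σ * ((a - b) ^ 2 * (2 * a + b)) := by positivity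
  nlinarith [hq, hcube]
end

section
/- Let H be a symmetric real p×p matrix, g ∈ ℝ^p, σ > 0, and λ ≥ 0. Suppose H + λI is positive semidefinite, s ∈ ℝ^p satisfies (H + λI)s = −g, u ∈ ℝ^p satisfies H u = −λ u, and α ∈ ℝ is such that ‖s + α u‖ = λ/σ. Then d = s + α u satisfies (H + σ‖d‖·I) d = −g with H + σ‖d‖·I positive semidefinite, and consequently d is a global minimizer of m(d') = ⟨g, d'⟩ + (1/2)⟨d', H d'⟩ + (σ/3)‖d'‖³ over ℝ^p. -/
open scoped RealInnerProductSpace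

section Aux

variable {p : ℕ}

lemma aux_toEuclideanLin_add_smul_one (H : Matrix (Fin p) (Fin p) ℝ) (c : ℝ)
    (x : EuclideanSpace ℝ (Fin p)) :
    Matrix.toEuclideanLin (H + c • (1 : Matrix (Fin p) (Fin p) ℝ)) x =
      Matrix.toEuclideanLin H x + c • x := by
  simp only [map_add, map_smul, LinearMap.add_apply, LinearMap.smul_apply]
  congr 1
  have : Matrix.toEuclideanLin (1 : Matrix (Fin p) (Fin p) ℝ) x = x := by
    simp [Matrix.toEuclideanLin_apply]
  rw [this]

lemma aux_inner_toEuclideanLin_nonneg {M : Matrix (Fin p) (Fin p) ℝ}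
    (hM : M.PosSemidef) (x : EuclideanSpace ℝ (Fin p)) :
    0 ≤ ⟪x, Matrix.toEuclideanLin M x⟫ := by
  have := hM.dotProduct_mulVec_nonneg (WithLp.equiv 2 (Fin p → ℝ) x)
  simpa [EuclideanSpace.inner_eq_star_dotProduct, Matrix.toEuclideanLin_apply,
    dotProduct_comm (M.mulVec _)] using this

end Aux

/-- Hard case resolution: if `H + λI ⪰ 0`, `(H + λI)s = -g`, `Hu = -λu` and
`‖s + αu‖ = λ/σ`, then `d = s + αu` satisfies the global optimality conditions
`(H + σ‖d‖ I) d = -g`, `H + σ‖d‖ I ⪰ 0`, and is a global minimizer of the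
cubic-regularized model `m(d') = ⟨g, d'⟩ + (1/2)⟨d', H d'⟩ + (σ/3)‖d'‖³`. -/
theorem cubic_subproblem_hard_case
    (p : ℕ) (hp : 1 ≤ p)
    (H : Matrix (Fin p) (Fin p) ℝ) (hH : H.IsSymm)
    (g : EuclideanSpace ℝ (Fin p)) (σ lam : ℝ) (hσ : 0 < σ) (hlam : 0 ≤ lam)
    (hpsd : (H + lam • (1 : Matrix (Fin p) (Fin p) ℝ)).PosSemidef)
    (s u : EuclideanSpace ℝ (Fin p))
    (hs : Matrix.toEuclideanLin (H + lam • (1 : Matrix (Fin p) (Fin p) ℝ)) s = -g)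
    (hu : Matrix.toEuclideanLin H u = -lam • u)
    (α : ℝ) (hα : ‖s + α • u‖ = lam / σ) :
    Matrix.toEuclideanLin
        (H + (σ * ‖s + α • u‖) • (1 : Matrix (Fin p) (Fin p) ℝ)) (s + α • u) = -g ∧
      (H + (σ * ‖s + α • u‖) • (1 : Matrix (Fin p) (Fin p) ℝ)).PosSemidef ∧
      ∀ d : EuclideanSpace ℝ (Fin p),
        ⟪g, s + α • u⟫ + (1 / 2) * ⟪s + α • u, Matrix.toEuclideanLin H (s + α • u)⟫
            + (σ / 3) * ‖s + α • u‖ ^ 3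
          ≤ ⟪g, d⟫ + (1 / 2) * ⟪d, Matrix.toEuclideanLin H d⟫ + (σ / 3) * ‖d‖ ^ 3 := by
  have hσne : σ ≠ 0 := ne_of_gt hσ
  have hd : σ * ‖s + α • u‖ = lam := by rw [hα]; field_simp
  rw [hd]
  set d₀ : EuclideanSpace ℝ (Fin p) := s + α • u with hd₀
  -- the first optimality condition
  have hAu : Matrix.toEuclideanLin (H + lam • (1 : Matrix (Fin p) (Fin p) ℝ)) u = 0 := by
    rw [aux_toEuclideanLin_add_smul_one, hu]; module
  have key1 : Matrix.toEuclideanLin (H + lam • (1 : Matrix (Fin p) (Fin p) ℝ)) d₀ = -g := by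
    rw [hd₀, map_add, map_smul, hs, hAu]; simp
  refine ⟨key1, hpsd, ?_⟩
  -- symmetry of H as a linear operator
  have hherm : H.IsHermitian := by
    rw [Matrix.IsHermitian]
    ext i j
    simp [Matrix.conjTranspose_apply, hH.apply]
  have hsymm : (Matrix.toEuclideanLin H).IsSymmetric :=
    Matrix.isHermitian_iff_isSymmetric.mp hherm
  intro d
  set T := Matrix.toEuclideanLin H with hT
  -- basic facts
  have hgd : ∀ x : EuclideanSpace ℝ (Fin p), ⟪g, x⟫ = -⟪d₀, T x⟫ - lam * ⟪d₀, x⟫ := by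
    intro x
    have h1 : ⟪T d₀ + lam • d₀, x⟫ = -⟪g, x⟫ := by
      have : T d₀ + lam • d₀ = -g := by
        rw [← key1, aux_toEuclideanLin_add_smul_one]
      rw [this, inner_neg_left]
    have h2 : ⟪T d₀, x⟫ = ⟪d₀, T x⟫ := hsymm d₀ x
    rw [inner_add_left, inner_smul_left, RCLike.conj_to_real, h2] at h1
    linarith
  have hnn : 0 ≤ ⟪d - d₀, T (d - d₀)⟫ + lam * ⟪d - d₀, d - d₀⟫ := by
    have := aux_inner_toEuclideanLin_nonneg hpsd (d - d₀)
    rw [aux_toEuclideanLin_add_smul_one, inner_add_right, inner_smul_right] at this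
    exact this
  -- rewrite the objective difference
  have expand : ⟪g, d⟫ + (1 / 2) * ⟪d, T d⟫ + (σ / 3) * ‖d‖ ^ 3
      - (⟪g, d₀⟫ + (1 / 2) * ⟪d₀, T d₀⟫ + (σ / 3) * ‖d₀‖ ^ 3)
      = (1 / 2) * (⟪d - d₀, T (d - d₀)⟫ + lam * ⟪d - d₀, d - d₀⟫)
        + (lam / 2) * (‖d₀‖ ^ 2 - ‖d‖ ^ 2) + (σ / 3) * (‖d‖ ^ 3 - ‖d₀‖ ^ 3) := by
    have e1 : ⟪d - d₀, T (d - d₀)⟫ = ⟪d, T d⟫ - 2 * ⟪d₀, T d⟫ + ⟪d₀, T d₀⟫ := by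
      rw [map_sub, inner_sub_left, inner_sub_right, inner_sub_right]
      have : ⟪d, T d₀⟫ = ⟪d₀, T d⟫ := by
        rw [← hsymm d d₀, real_inner_comm]
      rw [this]; ring
    have e2 : ⟪d - d₀, d - d₀⟫ = ‖d‖ ^ 2 - 2 * ⟪d₀, d⟫ + ‖d₀‖ ^ 2 := by
      rw [inner_sub_left, inner_sub_right, inner_sub_right, real_inner_self_eq_norm_sq,
        real_inner_self_eq_norm_sq, real_inner_comm d d₀]
      ring
    have e3 : ⟪d₀, d₀⟫ = ‖d₀‖ ^ 2 := real_inner_self_eq_norm_sq d₀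
    rw [hgd d, hgd d₀, e1, e2, e3]
    ring
  have hcube : 0 ≤ (lam / 2) * (‖d₀‖ ^ 2 - ‖d‖ ^ 2) + (σ / 3) * (‖d‖ ^ 3 - ‖d₀‖ ^ 3) := by
    have hlamσ : lam = σ * ‖d₀‖ := hd.symm
    set a := ‖d₀‖
    set b := ‖d‖
    have ha : 0 ≤ a := norm_nonneg _
    have hb : 0 ≤ b := norm_nonneg _
    have factored : (lam / 2) * (a ^ 2 - b ^ 2) + (σ / 3) * (b ^ 3 - a ^ 3)
        = (σ / 6) * ((a - b) ^ 2 * (a + 2 * b)) := by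
      rw [hlamσ]; ring
    rw [factored]
    have : 0 ≤ (a - b) ^ 2 * (a + 2 * b) := by positivity
    positivity
  nlinarith [hnn, hcube, expand]
end
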